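/- Let f(x) = ‖Ax − b‖² with A s-regular, ∇f Lipschitz with constant L(f) = 2λ_max(AᵀA), and L > L(f). Then the whole sequence {x^k} generated by iterative hard thresholding x^{k+1} ∈ P_{C_s}(x^k − (1/L)∇f(x^k)) converges to a single L-stationary point. -/

import Mathlib

noncomputable section
open scoped RealInnerProductSpace

/-- the number of nonzero components of `x` -/
def norm0 {n : ℕ} (x : EuclideanSpace ℝ (Fin n)) : ℕ :=
  (Finset.univ.filter fun i => x i ≠ 0).card

/-- the sparsity constraint set `C_s` -/
def Cs (n s : ℕ) : Set (EuclideanSpace ℝ (Fin n)) := {x | norm0 x ≤ s}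

/-- the set-valued Euclidean projection onto `Cs n s` -/
def projCs (n s : ℕ) (w : EuclideanSpace ℝ (Fin n)) : Set (EuclideanSpace ℝ (Fin n)) :=
  {y | y ∈ Cs n s ∧ ∀ z ∈ Cs n s, ‖y - w‖ ≤ ‖z - w‖}

/-- the s-th largest absolute value of a component of `x` -/
def Msval {n : ℕ} (s : ℕ) (x : EuclideanSpace ℝ (Fin n)) : ℝ :=
  (((List.ofFn fun i => |x i|).mergeSort (· ≥ ·)).getD (s - 1) 0)

open Filter Matrix
set_option maxHeartbeats 1000000

namespace S16
variable {m n s : ℕ}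

abbrev E (n : ℕ) := EuclideanSpace ℝ (Fin n)

def Phi (A : Matrix (Fin m) (Fin n) ℝ) : E n →ₗ[ℝ] E m where
  toFun v := WithLp.toLp 2 (fun i => A.mulVec (fun j => v j) i)
  map_add' u v := by
    ext i
    simp [Matrix.mulVec, dotProduct, mul_add, Finset.sum_add_distrib]
  map_smul' c v := by
    ext i
    simp only [Matrix.mulVec, dotProduct, RingHom.id_apply, PiLp.smul_apply, PiLp.toLp_apply,
      smul_eq_mul, Finset.mul_sum]
    exact Finset.sum_congr rfl fun j _ => by ring

lemma Phi_apply (A : Matrix (Fin m) (Fin n) ℝ) (v : E n) (i : Fin m) :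
    Phi A v i = ∑ j, A i j * v j := rfl

lemma inner_euc (x y : E n) : ⟪x, y⟫ = ∑ i, x i * y i := by
  simp [PiLp.inner_apply, RCLike.inner_apply, conj_trivial, mul_comm]

lemma norm_sq_euc (x : E n) : ‖x‖ ^ 2 = ∑ i, x i ^ 2 := by
  rw [EuclideanSpace.norm_eq, Real.sq_sqrt (by positivity)]
  simp [sq_abs]

lemma adj (A : Matrix (Fin m) (Fin n) ℝ) (w : E m) (d : E n) :
    ⟪Phi Aᵀ w, d⟫ = ⟪w, Phi A d⟫ := by
  simp only [inner_euc, Phi_apply, Matrix.transpose_apply, Finset.sum_mul, Finset.mul_sum]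
  rw [Finset.sum_comm]
  exact Finset.sum_congr rfl fun i _ => Finset.sum_congr rfl fun j _ => by ring

def bE (b : Fin m → ℝ) : E m := WithLp.toLp 2 (fun i => b i)

/-- the gradient of f -/
def gval (A : Matrix (Fin m) (Fin n) ℝ) (b : Fin m → ℝ) (x : E n) : E n :=
  (2:ℝ) • Phi Aᵀ (Phi A x - bE b)

section fprops
variable {A : Matrix (Fin m) (Fin n) ℝ} {b : Fin m → ℝ} {f : E n → ℝ}
  (hfdef : ∀ x, f x = ∑ i, (A.mulVec (fun j => x j) i - b i) ^ 2)
include hfdef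

lemma fval (x : E n) : f x = ‖Phi A x - bE b‖ ^ 2 := by
  rw [hfdef, norm_sq_euc]
  exact Finset.sum_congr rfl fun i _ => rfl

lemma f_nonneg (x : E n) : 0 ≤ f x := by rw [fval hfdef]; positivity

lemma expand (x d : E n) :
    f (x + d) = f x + ⟪gval A b x, d⟫ + ‖Phi A d‖ ^ 2 := by
  rw [fval hfdef, fval hfdef]
  have h1 : Phi A (x + d) - bE b = (Phi A x - bE b) + Phi A d := by
    rw [map_add]; abel
  rw [h1, norm_add_sq_real]
  have h2 : ⟪gval A b x, d⟫ = 2 * ⟪Phi A x - bE b, Phi A d⟫ := by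
    rw [gval, real_inner_smul_left, adj]
  rw [h2]

lemma hasGradientAt (x : E n) : HasGradientAt f (gval A b x) x := by
  rw [hasGradientAt_iff_hasFDerivAt, hasFDerivAt_iff_isLittleO_nhds_zero]
  have key : ∀ h : E n, f (x + h) - f x - (InnerProductSpace.toDual ℝ (E n)) (gval A b x) h
      = ‖Phi A h‖ ^ 2 := by
    intro h
    rw [expand hfdef, InnerProductSpace.toDual_apply_apply]
    ring
  simp only [key]
  set C := ‖(Phi A).toContinuousLinearMap‖ with hC
  rw [Asymptotics.isLittleO_iff]
  intro c hc
  have hC0 : 0 ≤ C := norm_nonneg _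
  rw [Metric.eventually_nhds_iff]
  refine ⟨c / (C ^ 2 + 1), by positivity, fun {h} hh => ?_⟩
  have hnorm : ‖Phi A h‖ ≤ C * ‖h‖ := (Phi A).toContinuousLinearMap.le_opNorm h
  have hd : dist h 0 = ‖h‖ := by simp
  rw [hd] at hh
  have h1 : ‖Phi A h‖ ^ 2 ≤ C ^ 2 * ‖h‖ * ‖h‖ := by
    have := mul_self_le_mul_self (norm_nonneg (Phi A h)) hnorm
    calc ‖Phi A h‖ ^ 2 = ‖Phi A h‖ * ‖Phi A h‖ := sq ‖Phi A h‖
      _ ≤ (C * ‖h‖) * (C * ‖h‖) := this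
      _ = C ^ 2 * ‖h‖ * ‖h‖ := by ring
  have h2 : C ^ 2 * ‖h‖ ≤ c := by
    calc C ^ 2 * ‖h‖ ≤ (C ^ 2 + 1) * (c / (C ^ 2 + 1)) := by
          apply mul_le_mul (by linarith) hh.le (norm_nonneg _) (by positivity)
      _ = c := by field_simp
  calc ‖‖Phi A h‖ ^ 2‖ = ‖Phi A h‖ ^ 2 := by rw [Real.norm_of_nonneg (by positivity)]
    _ ≤ C ^ 2 * ‖h‖ * ‖h‖ := h1
    _ ≤ c * ‖h‖ := by nlinarith [norm_nonneg h]

lemma grad_eq : gradient f = gval A b :=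
  gradient_eq fun x => hasGradientAt hfdef x

end fprops

def supp (x : E n) : Finset (Fin n) := Finset.univ.filter fun i => x i ≠ 0

lemma mem_supp {x : E n} {i : Fin n} : i ∈ supp x ↔ x i ≠ 0 := by
  simp [supp]

lemma mem_Cs {x : E n} : x ∈ Cs n s ↔ (supp x).card ≤ s := Iff.rfl

lemma supp_subset_mem_Cs {x : E n} {T : Finset (Fin n)} (hT : T.card ≤ s)
    (h : ∀ i ∉ T, x i = 0) : x ∈ Cs n s := by
  rw [mem_Cs]
  refine le_trans (Finset.card_le_card ?_) hT
  intro i hi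
  rw [mem_supp] at hi
  by_contra hiT
  exact hi (h i hiT)

lemma isClosed_suppset (T : Finset (Fin n)) :
    IsClosed {x : E n | ∀ i ∉ T, x i = 0} := by
  have : {x : E n | ∀ i ∉ T, x i = 0} = ⋂ (i : Fin n) (_ : i ∉ T), {x : E n | x i = 0} := by
    ext x; simp
  rw [this]
  refine isClosed_iInter fun i => isClosed_iInter fun _ => ?_
  exact isClosed_eq (EuclideanSpace.proj i (𝕜 := ℝ)).continuous continuous_const

lemma Cs_eq_union :
    Cs n s = ⋃ T ∈ {T : Finset (Fin n) | T.card ≤ s}, {x : E n | ∀ i ∉ T, x i = 0} := by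
  ext x
  simp only [Set.mem_iUnion, Set.mem_setOf_eq, exists_prop]
  constructor
  · intro hx
    exact ⟨supp x, hx, fun i hi => by simpa [mem_supp] using hi⟩
  · rintro ⟨T, hT, h⟩
    exact supp_subset_mem_Cs hT h

lemma isClosed_Cs : IsClosed (Cs n s) := by
  rw [Cs_eq_union]
  exact (Set.toFinite _).isClosed_biUnion fun T _ => isClosed_suppset T

/-- the projection inequality -/
lemma inner_le_of_proj {L : ℝ} (hL : 0 < L) {g xk y : E n}
    (hy : ‖y - (xk - (1 / L) • g)‖ ≤ ‖xk - (xk - (1 / L) • g)‖) :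
    ⟪g, y - xk⟫ ≤ -(L / 2) * ‖y - xk‖ ^ 2 := by
  set d := y - xk with hd
  have h1 : y - (xk - (1 / L) • g) = d + (1 / L) • g := by rw [hd]; abel
  have h2 : xk - (xk - (1 / L) • g) = (1 / L) • g := by abel
  rw [h1, h2] at hy
  have hsq := mul_self_le_mul_self (norm_nonneg _) hy
  rw [← sq, ← sq, norm_add_sq_real] at hsq
  have h3 : ⟪d, (1 / L) • g⟫ = (1 / L) * ⟪d, g⟫ := real_inner_smul_right d g (1 / L)
  rw [h3] at hsq
  have h4 : ‖d‖ ^ 2 + 2 * ((1 / L) * ⟪d, g⟫) ≤ 0 := by linarith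
  rw [real_inner_comm]
  have h5 := mul_le_mul_of_nonneg_left h4 hL.le
  have h6 : L * (‖d‖ ^ 2 + 2 * (1 / L * ⟪d, g⟫)) = L * ‖d‖ ^ 2 + 2 * ⟪d, g⟫ := by
    field_simp
  rw [h6, mul_zero] at h5
  linarith

section decrease
variable {A : Matrix (Fin m) (Fin n) ℝ} {b : Fin m → ℝ} {Lf : ℝ}
  (hlipg : ∀ x y : E n, ‖gval A b x - gval A b y‖ ≤ Lf * ‖x - y‖)
include hlipg

omit hlipg in
lemma gval_sub (x d : E n) :
    gval A b (x + d) - gval A b x = (2:ℝ) • Phi Aᵀ (Phi A d) := by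
  have h : (Phi A (x + d) - bE b) - (Phi A x - bE b) = Phi A d := by
    rw [map_add]; abel
  rw [gval, gval, ← smul_sub, ← map_sub, h]

lemma quad_le (d : E n) : ‖Phi A d‖ ^ 2 ≤ (Lf / 2) * ‖d‖ ^ 2 := by
  have h1 : ‖(2:ℝ) • Phi Aᵀ (Phi A d)‖ ≤ Lf * ‖d‖ := by
    have h := hlipg (0 + d) 0
    rw [gval_sub] at h
    simpa using h
  have h2 : ⟪Phi A d, Phi A d⟫ = (1/2) * ⟪(2:ℝ) • Phi Aᵀ (Phi A d), d⟫ := by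
    rw [real_inner_smul_left, adj]; ring
  have h3 : ⟪(2:ℝ) • Phi Aᵀ (Phi A d), d⟫ ≤ (Lf * ‖d‖) * ‖d‖ := by
    refine le_trans (real_inner_le_norm _ _) ?_
    exact mul_le_mul_of_nonneg_right h1 (norm_nonneg d)
  have h4 : ‖Phi A d‖ ^ 2 = ⟪Phi A d, Phi A d⟫ := (real_inner_self_eq_norm_sq _).symm
  rw [h4, h2]
  nlinarith [sq_nonneg ‖d‖]

lemma decrease {f : E n → ℝ}
    (hfdef : ∀ x, f x = ∑ i, (A.mulVec (fun j => x j) i - b i) ^ 2)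
    {L : ℝ} (hL0 : 0 < L) {xk y : E n} (hxk : xk ∈ Cs n s)
    (hy : y ∈ projCs n s (xk - (1/L) • gval A b xk)) :
    f y + ((L - Lf)/2) * ‖y - xk‖ ^ 2 ≤ f xk := by
  have hproj := hy.2 xk hxk
  have hiner := inner_le_of_proj hL0 hproj
  have hexp := expand hfdef xk (y - xk)
  have hxy : xk + (y - xk) = y := by abel
  rw [hxy] at hexp
  have hq := quad_le hlipg (y - xk)
  linarith

end decrease


lemma converge_of_finite_cluster {n : ℕ} (x : ℕ → E n) (R : ℝ) (hb : ∀ k, ‖x k‖ ≤ R)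
    (hstep : Tendsto (fun k => dist (x (k+1)) (x k)) atTop (nhds 0))
    (F : Set (E n)) (hF : F.Finite)
    (hacc : ∀ p : E n, (∃ φ : ℕ → ℕ, StrictMono φ ∧ Tendsto (x ∘ φ) atTop (nhds p)) → p ∈ F) :
    ∃ p, Tendsto x atTop (nhds p) := by
  classical
  set C : Set (E n) := {p | ∃ φ : ℕ → ℕ, StrictMono φ ∧ Tendsto (x ∘ φ) atTop (nhds p)}
    with hC
  have hball : ∀ k, x k ∈ Metric.closedBall (0 : E n) R := by
    intro k; rw [Metric.mem_closedBall, dist_zero_right]; exact hb k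
  have hCfin : C.Finite := hF.subset fun p hp => hacc p hp
  have hclose : ∀ ε : ℝ, 0 < ε → ∀ᶠ k in atTop, ∃ p ∈ C, dist (x k) p < ε := by
    intro ε hε
    by_contra hcon
    rw [Filter.not_eventually] at hcon
    have hcon' : ∃ᶠ k in atTop, ∀ p ∈ C, ε ≤ dist (x k) p := by
      refine hcon.mono fun k hk => ?_
      push_neg at hk
      exact hk
    obtain ⟨ψ, hψ, hψ2⟩ := extraction_of_frequently_atTop hcon'
    obtain ⟨q, -, ρ, hρ, hρlim⟩ :=
      tendsto_subseq_of_bounded Metric.isBounded_closedBall (fun k => hball (ψ k))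
    have hqC : q ∈ C := ⟨ψ ∘ ρ, hψ.comp hρ, hρlim⟩
    have hge : ∀ k, ε ≤ dist ((x ∘ ψ ∘ ρ) k) q := fun k => hψ2 (ρ k) q hqC
    have hdist : Tendsto (fun k => dist ((x ∘ ψ ∘ ρ) k) q) atTop (nhds 0) := by
      rw [← dist_self q]
      exact hρlim.dist tendsto_const_nhds
    have : ε ≤ 0 := le_of_tendsto_of_tendsto' tendsto_const_nhds hdist hge
    linarith
  set Pr := (hCfin.toFinset ×ˢ hCfin.toFinset).filter (fun pq => pq.1 ≠ pq.2) with hPr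
  set D := Pr.image (fun pq => dist pq.1 pq.2) with hD
  set δ : ℝ := if hne : D.Nonempty then D.min' hne else 1 with hδ
  have hδpos : 0 < δ := by
    rw [hδ]
    split_ifs with hne
    · obtain ⟨pq, hpq, hed⟩ := Finset.mem_image.mp (D.min'_mem hne)
      rw [hPr, Finset.mem_filter] at hpq
      rw [← hed]
      exact dist_pos.mpr hpq.2
    · exact one_pos
  have hsep : ∀ p ∈ C, ∀ q ∈ C, dist p q < δ → p = q := by
    intro p hp q hq hlt
    by_contra hne
    have hmem : dist p q ∈ D := by
      rw [hD]
      exact Finset.mem_image.mpr ⟨(p, q), Finset.mem_filter.mpr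
        ⟨Finset.mem_product.mpr ⟨hCfin.mem_toFinset.mpr hp, hCfin.mem_toFinset.mpr hq⟩, hne⟩, rfl⟩
    have hDne : D.Nonempty := ⟨_, hmem⟩
    rw [hδ, dif_pos hDne] at hlt
    exact absurd (D.min'_le _ hmem) (not_le.mpr hlt)
  have hev : ∀ᶠ k in atTop,
      (∃ p ∈ C, dist (x k) p < δ/3) ∧ dist (x (k+1)) (x k) < δ/3 := by
    exact (hclose (δ/3) (by linarith)).and (hstep.eventually (gt_mem_nhds (by linarith)))
  obtain ⟨K, hK⟩ := eventually_atTop.mp hev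
  obtain ⟨⟨p₀, hp₀C, hp₀⟩, -⟩ := hK K le_rfl
  have lock : ∀ j, dist (x (K + j)) p₀ < δ/3 := by
    intro j
    induction j with
    | zero => simpa using hp₀
    | succ j ih =>
      obtain ⟨-, hstep'⟩ := hK (K + j) (Nat.le_add_right _ _)
      obtain ⟨⟨q', hq'C, hq'⟩, -⟩ := hK (K + j + 1) (by omega)
      have hq'p : dist q' p₀ < δ := by
        calc dist q' p₀ ≤ dist q' (x (K+j+1)) + dist (x (K+j+1)) (x (K+j)) + dist (x (K+j)) p₀ :=
              dist_triangle4 q' (x (K+j+1)) (x (K+j)) p₀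
          _ < δ/3 + δ/3 + δ/3 := by
              have h1 : dist q' (x (K+j+1)) < δ/3 := by rw [dist_comm]; exact hq'
              linarith
          _ = δ := by ring
      have heq : q' = p₀ := hsep q' hq'C p₀ hp₀C hq'p
      have : K + (j + 1) = K + j + 1 := by omega
      rw [this, ← heq]
      exact hq'
  refine ⟨p₀, Metric.tendsto_atTop.mpr fun ε hε => ?_⟩
  have hmin : (0:ℝ) < min ε (δ/3) := lt_min hε (by linarith)
  obtain ⟨K', hK'⟩ := eventually_atTop.mp (hclose _ hmin)
  refine ⟨max K K', fun k hk => ?_⟩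
  obtain ⟨q, hqC, hq⟩ := hK' k (le_trans (le_max_right _ _) hk)
  have hkK : K ≤ k := le_trans (le_max_left _ _) hk
  have h1 : dist (x k) p₀ < δ/3 := by
    have : k = K + (k - K) := by omega
    rw [this]; exact lock (k - K)
  have hqp : dist q p₀ < δ := by
    calc dist q p₀ ≤ dist q (x k) + dist (x k) p₀ := dist_triangle q (x k) p₀
      _ < min ε (δ/3) + δ/3 := by
          have : dist q (x k) < min ε (δ/3) := by rw [dist_comm]; exact hq
          linarith
      _ ≤ δ/3 + δ/3 := by
          have := min_le_right ε (δ/3); linarith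
      _ < δ := by linarith
  have heq : q = p₀ := hsep q hqC p₀ hp₀C hqp
  rw [← heq]
  exact lt_of_lt_of_le hq (min_le_left _ _)

/-- on its support, a projection point agrees with `w` -/
lemma proj_coord {w y : E n} (hy : y ∈ projCs n s w) {i : Fin n} (hi : y i ≠ 0) :
    y i = w i := by
  classical
  set z : E n := WithLp.toLp 2 (fun j => if j = i then w i else y j) with hz
  have hzCs : z ∈ Cs n s := by
    refine le_trans (Finset.card_le_card ?_) hy.1
    intro j hj
    simp only [Finset.mem_filter, Finset.mem_univ, true_and] at hj ⊢
    by_cases hji : j = i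
    · subst hji; exact hi
    · rw [hz] at hj; simpa [hji] using hj
  have hle := hy.2 z hzCs
  have hsq := mul_self_le_mul_self (norm_nonneg _) hle
  rw [← sq, ← sq, norm_sq_euc, norm_sq_euc] at hsq
  have hterm : ∀ j, ((z - w) j) ^ 2 =
      ((y - w) j) ^ 2 - (if j = i then ((y - w) i) ^ 2 else 0) := by
    intro j
    by_cases hji : j = i
    · subst hji
      simp [hz, PiLp.sub_apply]
    · simp [hz, hji, PiLp.sub_apply]
  rw [Finset.sum_congr rfl fun j _ => hterm j, Finset.sum_sub_distrib,
    Finset.sum_ite_eq' Finset.univ i fun _ => ((y - w) i) ^ 2] at hsq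
  simp only [Finset.mem_univ, if_true] at hsq
  have h0 : ((y - w) i) ^ 2 ≤ 0 := by linarith
  have h1 : (y - w) i = 0 := by
    have := sq_nonneg ((y - w) i)
    nlinarith
  have : y i - w i = 0 := h1
  linarith

lemma inj_of_supp {A : Matrix (Fin m) (Fin n) ℝ}
    (hreg : ∀ S : Finset (Fin n), S.card = s →
      LinearIndependent ℝ (fun j : S => fun i => A i j))
    (hsn : s ≤ n) {d : E n} (hd : (supp d).card ≤ s) (hAd : Phi A d = 0) : d = 0 := by
  obtain ⟨S, hSsub, hScard⟩ := Finset.exists_superset_card_eq hd (by simpa using hsn)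
  have hli := hreg S hScard
  rw [Fintype.linearIndependent_iff] at hli
  have hsum : ∑ j : S, d (j : Fin n) • (fun i => A i (j : Fin n)) = 0 := by
    funext i
    have h1 : (∑ j : S, d (j : Fin n) • (fun i => A i (j : Fin n))) i
        = ∑ j : S, d (j : Fin n) * A i (j : Fin n) := by
      simp [Finset.sum_apply]
    have h2 : ∑ j : S, d (j : Fin n) * A i (j : Fin n)
        = ∑ j ∈ S, d j * A i j := Finset.sum_coe_sort S fun j => d j * A i j
    have h3 : ∑ j ∈ S, d j * A i j = ∑ j, d j * A i j := by
      refine Finset.sum_subset (Finset.subset_univ S) fun j _ hj => ?_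
      have : d j = 0 := by
        by_contra hdj
        exact hj (hSsub (mem_supp.mpr hdj))
      rw [this, zero_mul]
    have h4 : ∑ j, d j * A i j = Phi A d i := by
      rw [Phi_apply]
      exact Finset.sum_congr rfl fun j _ => mul_comm _ _
    rw [Pi.zero_apply, h1, h2, h3, h4, hAd]
    rfl
  have hzero : ∀ j : S, d (j : Fin n) = 0 := hli (fun j => d (j : Fin n)) hsum
  ext i
  by_cases hiS : i ∈ S
  · exact hzero ⟨i, hiS⟩
  · by_contra hdi
    exact hiS (hSsub (mem_supp.mpr hdi))

/-- an L-stationary point has vanishing gradient on its support -/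
lemma stat_grad_zero {A : Matrix (Fin m) (Fin n) ℝ} {b : Fin m → ℝ} {L : ℝ} (hL : L ≠ 0)
    {p : E n} (hp : p ∈ projCs n s (p - (1/L) • gval A b p)) {i : Fin n} (hi : p i ≠ 0) :
    gval A b p i = 0 := by
  have := proj_coord hp hi
  have h1 : (p - (1/L) • gval A b p) i = p i - (1/L) * gval A b p i := rfl
  rw [h1] at this
  have h2 : (1/L) * gval A b p i = 0 := by linarith
  have h3 : (1/L : ℝ) ≠ 0 := one_div_ne_zero hL
  exact (mul_eq_zero.mp h2).resolve_left h3

/-- finiteness of the set of L-stationary points -/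
lemma stat_finite {A : Matrix (Fin m) (Fin n) ℝ} {b : Fin m → ℝ} {L : ℝ} (hL : L ≠ 0)
    (hreg : ∀ S : Finset (Fin n), S.card = s →
      LinearIndependent ℝ (fun j : S => fun i => A i j))
    (hsn : s ≤ n) :
    {p : E n | p ∈ projCs n s (p - (1/L) • gval A b p)}.Finite := by
  classical
  have hinj : Set.InjOn supp {p : E n | p ∈ projCs n s (p - (1/L) • gval A b p)} := by
    intro p hp q hq hsupp
    rw [Set.mem_setOf_eq] at hp hq
    set d : E n := p - q with hd
    have hdsupp : supp d ⊆ supp p := by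
      intro i hi
      rw [mem_supp] at hi ⊢
      by_contra hpi
      have hqi : q i = 0 := by
        by_contra hqi
        have : i ∈ supp q := mem_supp.mpr hqi
        rw [← hsupp, mem_supp] at this
        exact this hpi
      apply hi
      show p i - q i = 0
      rw [hpi, hqi, sub_zero]
    have hgd : gval A b p - gval A b q = (2:ℝ) • Phi Aᵀ (Phi A d) := by
      have := gval_sub (A := A) (b := b) q d
      have hqd : q + d = p := by rw [hd]; abel
      rwa [hqd] at this
    have hPhiAd : Phi A d = 0 := by
      have hinner : ⟪Phi Aᵀ (Phi A d), d⟫ = 0 := by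
        rw [inner_euc]
        refine Finset.sum_eq_zero fun i _ => ?_
        by_cases hip : i ∈ supp p
        · have h1 : gval A b p i = 0 := stat_grad_zero hL hp (mem_supp.mp hip)
          have h2 : gval A b q i = 0 :=
            stat_grad_zero hL hq (mem_supp.mp (hsupp ▸ hip))
          have h3 : ((2:ℝ) • Phi Aᵀ (Phi A d)) i = 0 := by
            rw [← hgd]
            show gval A b p i - gval A b q i = 0
            rw [h1, h2, sub_zero]
          have h4 : (2:ℝ) * Phi Aᵀ (Phi A d) i = 0 := h3
          have h5 : Phi Aᵀ (Phi A d) i = 0 := by linarith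
          rw [h5, zero_mul]
        · have : d i = 0 := by
            by_contra hdi
            exact hip (hdsupp (mem_supp.mpr hdi))
          rw [this, mul_zero]
      have hnorm : ‖Phi A d‖ ^ 2 = 0 := by
        rw [← real_inner_self_eq_norm_sq, ← adj, hinner]
      have := sq_eq_zero_iff.mp hnorm
      rwa [norm_eq_zero] at this
    have hdcard : (supp d).card ≤ s :=
      le_trans (Finset.card_le_card hdsupp) hp.1
    have : d = 0 := inj_of_supp hreg hsn hdcard hPhiAd
    have : p - q = 0 := this
    exact sub_eq_zero.mp this
  have himg : (supp '' {p : E n | p ∈ projCs n s (p - (1/L) • gval A b p)}).Finite :=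
    Set.toFinite _
  exact Set.Finite.of_finite_image himg hinj

/-- uniform lower bound for `‖Φd‖` on sparse vectors -/
lemma exists_sigma {A : Matrix (Fin m) (Fin n) ℝ}
    (hreg : ∀ S : Finset (Fin n), S.card = s →
      LinearIndependent ℝ (fun j : S => fun i => A i j))
    (hsn : s ≤ n) (S : Finset (Fin n)) (hS : S.card = s) :
    ∃ σ : ℝ, 0 < σ ∧ ∀ d : E n, (∀ i ∉ S, d i = 0) → σ * ‖d‖ ≤ ‖Phi A d‖ := by
  classical
  set K : Set (E n) := {d | (∀ i ∉ S, d i = 0) ∧ ‖d‖ = 1} with hK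
  have hinjS : ∀ d : E n, (∀ i ∉ S, d i = 0) → Phi A d = 0 → d = 0 := by
    intro d hd hAd
    refine inj_of_supp hreg hsn ?_ hAd
    rw [← hS]
    refine Finset.card_le_card fun i hi => ?_
    rw [mem_supp] at hi
    by_contra hiS
    exact hi (hd i hiS)
  rcases K.eq_empty_or_nonempty with hKe | hKne
  · refine ⟨1, one_pos, fun d hd => ?_⟩
    rcases eq_or_ne d 0 with rfl | hd0
    · simp
    · exfalso
      have hu : (‖d‖⁻¹ • d) ∈ K := by
        constructor
        · intro i hi
          show ‖d‖⁻¹ • d i = 0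
          rw [hd i hi, smul_zero]
        · rw [norm_smul, norm_inv, norm_norm,
            inv_mul_cancel₀ (norm_ne_zero_iff.mpr hd0)]
      rw [hKe] at hu
      exact hu
  · have hKcl : IsClosed K := by
      have h1 : K = {d : E n | ∀ i ∉ S, d i = 0} ∩ {d : E n | ‖d‖ = 1} := rfl
      rw [h1]
      exact (isClosed_suppset S).inter (isClosed_eq continuous_norm continuous_const)
    have hKbd : Bornology.IsBounded K :=
      (Metric.isBounded_closedBall (x := (0:E n)) (r := 1)).subset fun d hd => by
        rw [Metric.mem_closedBall, dist_zero_right, hd.2]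
    have hKcp : IsCompact K := Metric.isCompact_of_isClosed_isBounded hKcl hKbd
    have hcont : Continuous fun d : E n => ‖Phi A d‖ :=
      ((Phi A).continuous_of_finiteDimensional).norm
    obtain ⟨d₀, hd₀K, hd₀min⟩ := hKcp.exists_isMinOn hKne hcont.continuousOn
    have hd₀0 : d₀ ≠ 0 := fun h => by
      have := hd₀K.2
      rw [h, norm_zero] at this
      exact one_ne_zero this.symm
    have hσpos : 0 < ‖Phi A d₀‖ := by
      rw [norm_pos_iff]
      exact fun h => hd₀0 (hinjS d₀ hd₀K.1 h)
    refine ⟨‖Phi A d₀‖, hσpos, fun d hd => ?_⟩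
    rcases eq_or_ne d 0 with rfl | hd0
    · simp
    · have hu : (‖d‖⁻¹ • d) ∈ K := by
        constructor
        · intro i hi
          show ‖d‖⁻¹ • d i = 0
          rw [hd i hi, smul_zero]
        · rw [norm_smul, norm_inv, norm_norm,
            inv_mul_cancel₀ (norm_ne_zero_iff.mpr hd0)]
      have hle : ‖Phi A d₀‖ ≤ ‖Phi A (‖d‖⁻¹ • d)‖ := hd₀min hu
      rw [_root_.map_smul, norm_smul, norm_inv, norm_norm] at hle
      have hdn : 0 < ‖d‖ := norm_pos_iff.mpr hd0
      rw [mul_comm]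
      calc ‖d‖ * ‖Phi A d₀‖ ≤ ‖d‖ * (‖d‖⁻¹ * ‖Phi A d‖) :=
            mul_le_mul_of_nonneg_left hle hdn.le
        _ = ‖Phi A d‖ := by field_simp

/-- boundedness of sparse sublevel sets -/
lemma exists_bound {A : Matrix (Fin m) (Fin n) ℝ} {b : Fin m → ℝ}
    (hreg : ∀ S : Finset (Fin n), S.card = s →
      LinearIndependent ℝ (fun j : S => fun i => A i j))
    (hsn : s ≤ n) (c : ℝ) :
    ∃ R : ℝ, ∀ x : E n, x ∈ Cs n s → ‖Phi A x - bE b‖ ^ 2 ≤ c → ‖x‖ ≤ R := by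
  classical
  have key : ∀ S : Finset (Fin n), S.card = s →
      ∃ σ : ℝ, 0 < σ ∧ ∀ d : E n, (∀ i ∉ S, d i = 0) → σ * ‖d‖ ≤ ‖Phi A d‖ :=
    fun S hS => exists_sigma hreg hsn S hS
  choose! σf hσpos hσ using key
  set 𝒮 : Finset (Finset (Fin n)) := Finset.univ.filter fun S => S.card = s with h𝒮
  have h𝒮ne : 𝒮.Nonempty := by
    obtain ⟨S, -, hS⟩ := Finset.exists_superset_card_eq
      (Finset.card_empty (α := Fin n) ▸ Nat.zero_le s) (by simpa using hsn)
    exact ⟨S, by simp [h𝒮, hS]⟩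
  set σ₀ : ℝ := (𝒮.image σf).min' (h𝒮ne.image σf) with hσ₀
  have hσ₀pos : 0 < σ₀ := by
    obtain ⟨S, hS, hed⟩ := Finset.mem_image.mp ((𝒮.image σf).min'_mem (h𝒮ne.image σf))
    rw [hσ₀, ← hed]
    exact hσpos S (by simpa [h𝒮] using hS)
  refine ⟨(Real.sqrt c + ‖bE b‖) / σ₀, fun x hx hfx => ?_⟩
  obtain ⟨S, hSsub, hScard⟩ := Finset.exists_superset_card_eq hx (by simpa using hsn)
  have hx0 : ∀ i ∉ S, x i = 0 := by
    intro i hi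
    by_contra hxi
    exact hi (hSsub (mem_supp.mpr hxi))
  have h1 : σf S * ‖x‖ ≤ ‖Phi A x‖ := hσ S hScard x hx0
  have h2 : σ₀ ≤ σf S := (𝒮.image σf).min'_le _
    (Finset.mem_image.mpr ⟨S, by simp [h𝒮, hScard], rfl⟩)
  have hc0 : 0 ≤ c := le_trans (sq_nonneg _) hfx
  have h3 : ‖Phi A x - bE b‖ ≤ Real.sqrt c := by
    rw [← Real.sqrt_sq (norm_nonneg (Phi A x - bE b))]
    exact Real.sqrt_le_sqrt hfx
  have h4 : ‖Phi A x‖ ≤ Real.sqrt c + ‖bE b‖ := by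
    calc ‖Phi A x‖ = ‖(Phi A x - bE b) + bE b‖ := by rw [sub_add_cancel]
      _ ≤ ‖Phi A x - bE b‖ + ‖bE b‖ := norm_add_le _ _
      _ ≤ Real.sqrt c + ‖bE b‖ := by linarith
  have h5 : σ₀ * ‖x‖ ≤ Real.sqrt c + ‖bE b‖ := by
    calc σ₀ * ‖x‖ ≤ σf S * ‖x‖ := mul_le_mul_of_nonneg_right h2 (norm_nonneg x)
      _ ≤ ‖Phi A x‖ := h1
      _ ≤ Real.sqrt c + ‖bE b‖ := h4
  rw [le_div_iff₀ hσ₀pos, mul_comm]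
  exact h5

lemma gval_continuous (A : Matrix (Fin m) (Fin n) ℝ) (b : Fin m → ℝ) :
    Continuous (gval A b) := by
  have h1 : Continuous fun x : E n => Phi A x - bE b :=
    ((Phi A).continuous_of_finiteDimensional).sub continuous_const
  have h2 : Continuous fun x : E n => Phi Aᵀ (Phi A x - bE b) :=
    ((Phi Aᵀ).continuous_of_finiteDimensional).comp h1
  exact h2.const_smul (2:ℝ)

/-- limits of the IHT sequence are L-stationary -/
lemma cluster_stationary {A : Matrix (Fin m) (Fin n) ℝ} {b : Fin m → ℝ} {L : ℝ}
    (x : ℕ → E n)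
    (hiter : ∀ k, x (k+1) ∈ projCs n s (x k - (1/L) • gval A b (x k)))
    (hstep : Tendsto (fun k => x (k+1) - x k) atTop (nhds 0))
    {p : E n} (φ : ℕ → ℕ) (hφ : StrictMono φ) (hlim : Tendsto (x ∘ φ) atTop (nhds p)) :
    p ∈ projCs n s (p - (1/L) • gval A b p) := by
  have hylim : Tendsto (fun k => x (φ k + 1)) atTop (nhds p) := by
    have h1 : Tendsto (fun k => x (φ k + 1) - x (φ k)) atTop (nhds 0) :=
      hstep.comp hφ.tendsto_atTop
    have h2 : Tendsto (fun k => (x ∘ φ) k + (x (φ k + 1) - x (φ k))) atTop (nhds (p + 0)) :=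
      hlim.add h1
    rw [add_zero] at h2
    refine h2.congr fun k => ?_
    simp only [Function.comp_apply]
    abel
  have hwlim : Tendsto (fun k => x (φ k) - (1/L) • gval A b (x (φ k))) atTop
      (nhds (p - (1/L) • gval A b p)) := by
    refine hlim.sub ?_
    exact (((gval_continuous A b).tendsto p).comp hlim).const_smul _
  constructor
  · exact isClosed_Cs.mem_of_tendsto hylim (Filter.Eventually.of_forall fun k => (hiter (φ k)).1)
  · intro z hz
    have hlhs : Tendsto (fun k => ‖x (φ k + 1) - (x (φ k) - (1/L) • gval A b (x (φ k)))‖)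
        atTop (nhds ‖p - (p - (1/L) • gval A b p)‖) := (hylim.sub hwlim).norm
    have hrhs : Tendsto (fun k => ‖z - (x (φ k) - (1/L) • gval A b (x (φ k)))‖)
        atTop (nhds ‖z - (p - (1/L) • gval A b p)‖) := (tendsto_const_nhds.sub hwlim).norm
    exact le_of_tendsto_of_tendsto' hlhs hrhs fun k => (hiter (φ k)).2 z hz

section affine
variable {A : Matrix (Fin m) (Fin n) ℝ} {b : Fin m → ℝ} {Lf L : ℝ}

/-- the linear map of the gradient iteration -/
def Mlin (A : Matrix (Fin m) (Fin n) ℝ) (L : ℝ) : E n →ₗ[ℝ] E n :=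
  LinearMap.id - (2/L) • ((Phi Aᵀ).comp (Phi A))

lemma Mlin_apply (v : E n) : Mlin A L v = v - (2/L) • Phi Aᵀ (Phi A v) := rfl

lemma psi_phi_bound (hlipg : ∀ x y : E n, ‖gval A b x - gval A b y‖ ≤ Lf * ‖x - y‖)
    (d : E n) : ‖Phi Aᵀ (Phi A d)‖ ≤ (Lf/2) * ‖d‖ := by
  have h := hlipg (0 + d) 0
  rw [gval_sub] at h
  simp only [add_zero, zero_add, sub_zero] at h
  rw [norm_smul] at h
  simp only [Real.norm_ofNat] at h
  linarith

lemma psi_sq (hlipg : ∀ x y : E n, ‖gval A b x - gval A b y‖ ≤ Lf * ‖x - y‖)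
    (hLf0 : 0 ≤ Lf) (w : E m) : ‖Phi Aᵀ w‖ ^ 2 ≤ (Lf/2) * ‖w‖ ^ 2 := by
  set a := ‖Phi Aᵀ w‖ with ha
  set bq := ‖w‖ with hbq
  set cq := ‖Phi A (Phi Aᵀ w)‖ with hcq
  have h1 : a ^ 2 ≤ bq * cq := by
    rw [ha, ← real_inner_self_eq_norm_sq, adj A w (Phi Aᵀ w)]
    calc ⟪w, Phi A (Phi Aᵀ w)⟫ ≤ ‖w‖ * ‖Phi A (Phi Aᵀ w)‖ := real_inner_le_norm _ _
      _ = bq * cq := rfl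
  have h2 : cq ^ 2 ≤ (Lf/2) * a ^ 2 := by
    rw [hcq, ← real_inner_self_eq_norm_sq, ← adj A (Phi A (Phi Aᵀ w)) (Phi Aᵀ w)]
    calc ⟪Phi Aᵀ (Phi A (Phi Aᵀ w)), Phi Aᵀ w⟫
        ≤ ‖Phi Aᵀ (Phi A (Phi Aᵀ w))‖ * ‖Phi Aᵀ w‖ := real_inner_le_norm _ _
      _ ≤ ((Lf/2) * ‖Phi Aᵀ w‖) * ‖Phi Aᵀ w‖ :=
          mul_le_mul_of_nonneg_right (psi_phi_bound hlipg _) (norm_nonneg _)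
      _ = (Lf/2) * a ^ 2 := by rw [ha]; ring
  have ha0 : 0 ≤ a := norm_nonneg _
  have hbq0 : 0 ≤ bq := norm_nonneg _
  have hcq0 : 0 ≤ cq := norm_nonneg _
  rcases eq_or_lt_of_le ha0 with h | h
  · rw [← h]
    simpa using mul_nonneg (by linarith : (0:ℝ) ≤ Lf/2) (sq_nonneg bq)
  · have h3 : a^2 * a^2 ≤ (bq * cq) * (bq * cq) :=
      mul_self_le_mul_self (sq_nonneg a) h1
    have h4 : (bq * cq) * (bq * cq) = bq^2 * cq^2 := by ring
    have h5 : bq^2 * cq^2 ≤ bq^2 * ((Lf/2) * a^2) :=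
      mul_le_mul_of_nonneg_left h2 (sq_nonneg bq)
    have h6 : a^2 * a^2 ≤ ((Lf/2) * bq^2) * a^2 := by
      calc a^2 * a^2 ≤ bq^2 * ((Lf/2) * a^2) := by linarith
        _ = ((Lf/2) * bq^2) * a^2 := by ring
    exact le_of_mul_le_mul_right h6 (by positivity)

lemma Mlin_contract_strict (hlipg : ∀ x y : E n, ‖gval A b x - gval A b y‖ ≤ Lf * ‖x - y‖)
    (hLf0 : 0 ≤ Lf) (hLfL : Lf < L) (hL0 : 0 < L) {v : E n} (hv : Phi A v ≠ 0) :
    ‖Mlin A L v‖ < ‖v‖ := by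
  have hexp : ‖Mlin A L v‖ ^ 2
      = ‖v‖ ^ 2 - 2 * ((2/L) * ‖Phi A v‖ ^ 2) + (2/L)^2 * ‖Phi Aᵀ (Phi A v)‖ ^ 2 := by
    rw [Mlin_apply, norm_sub_sq_real]
    have e1 : ⟪v, (2/L) • Phi Aᵀ (Phi A v)⟫ = (2/L) * ‖Phi A v‖ ^ 2 := by
      rw [real_inner_smul_right]
      congr 1
      rw [real_inner_comm, adj, real_inner_self_eq_norm_sq]
    have e2 : ‖(2/L) • Phi Aᵀ (Phi A v)‖ ^ 2 = (2/L)^2 * ‖Phi Aᵀ (Phi A v)‖ ^ 2 := by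
      rw [norm_smul, mul_pow, Real.norm_eq_abs, sq_abs]
    rw [e1, e2]
  have hps : ‖Phi Aᵀ (Phi A v)‖ ^ 2 ≤ (Lf/2) * ‖Phi A v‖ ^ 2 := psi_sq hlipg hLf0 _
  have hPv : 0 < ‖Phi A v‖ ^ 2 := pow_pos (norm_pos_iff.mpr hv) 2
  have hlt : ‖Mlin A L v‖ ^ 2 < ‖v‖ ^ 2 := by
    rw [hexp]
    have hcoef : (2/L)^2 * ((Lf/2) * ‖Phi A v‖ ^ 2) < 2 * ((2/L) * ‖Phi A v‖ ^ 2) := by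
      have c1 : (2/L)^2 * (Lf/2) < 2 * (2/L) := by
        rw [div_pow]
        rw [div_mul_eq_mul_div, div_lt_iff₀ (by positivity)]
        have : 2 * (2 / L) * L ^ 2 = 4 * L := by field_simp; ring
        rw [this]
        have h4 : (2:ℝ)^2 * (Lf/2) = 2 * Lf := by ring
        rw [h4]
        nlinarith
      calc (2/L)^2 * ((Lf/2) * ‖Phi A v‖ ^ 2) = ((2/L)^2 * (Lf/2)) * ‖Phi A v‖ ^ 2 := by ring
        _ < (2 * (2/L)) * ‖Phi A v‖ ^ 2 := by
            exact mul_lt_mul_of_pos_right c1 hPv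
        _ = 2 * ((2/L) * ‖Phi A v‖ ^ 2) := by ring
    have step : (2/L)^2 * ‖Phi Aᵀ (Phi A v)‖ ^ 2 ≤ (2/L)^2 * ((Lf/2) * ‖Phi A v‖ ^ 2) :=
      mul_le_mul_of_nonneg_left hps (by positivity)
    linarith
  by_contra hge
  push_neg at hge
  have := mul_self_le_mul_self (norm_nonneg v) hge
  rw [← sq, ← sq] at this
  linarith

lemma Mlin_maps_range (v : E n) (hv : v ∈ LinearMap.range (Phi Aᵀ : E m →ₗ[ℝ] E n)) :
    Mlin A L v ∈ LinearMap.range (Phi Aᵀ : E m →ₗ[ℝ] E n) := by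
  obtain ⟨u, rfl⟩ := hv
  refine ⟨u - (2/L) • Phi A (Phi Aᵀ u), ?_⟩
  rw [map_sub, _root_.map_smul, Mlin_apply]

lemma contraction (hlipg : ∀ x y : E n, ‖gval A b x - gval A b y‖ ≤ Lf * ‖x - y‖)
    (hLf0 : 0 ≤ Lf) (hLfL : Lf < L) (hL0 : 0 < L) :
    ∃ q : ℝ, 0 ≤ q ∧ q < 1 ∧
      ∀ v ∈ LinearMap.range (Phi Aᵀ : E m →ₗ[ℝ] E n), ‖Mlin A L v‖ ≤ q * ‖v‖ := by
  classical
  set W : Submodule ℝ (E n) := LinearMap.range (Phi Aᵀ) with hW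
  have hPhiv : ∀ v ∈ W, v ≠ 0 → Phi A v ≠ 0 := by
    rintro v ⟨u, rfl⟩ hv0 hPv
    apply hv0
    have : ‖Phi Aᵀ u‖ ^ 2 = 0 := by
      rw [← real_inner_self_eq_norm_sq, adj A u (Phi Aᵀ u), hPv, inner_zero_right]
    rw [← norm_eq_zero]
    exact pow_eq_zero_iff (n := 2) (by norm_num) |>.mp this
  set K : Set (E n) := (W : Set (E n)) ∩ {v | ‖v‖ = 1} with hK
  rcases K.eq_empty_or_nonempty with hKe | hKne
  · refine ⟨0, le_refl 0, one_pos, fun v hv => ?_⟩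
    rcases eq_or_ne v 0 with rfl | hv0
    · simp
    · exfalso
      have hu : (‖v‖⁻¹ • v) ∈ K := by
        refine ⟨W.smul_mem _ hv, ?_⟩
        show ‖‖v‖⁻¹ • v‖ = 1
        rw [norm_smul, norm_inv, norm_norm, inv_mul_cancel₀ (norm_ne_zero_iff.mpr hv0)]
      rw [hKe] at hu
      exact hu
  · have hKcl : IsClosed K := by
      refine (Submodule.closed_of_finiteDimensional W).inter
        (isClosed_eq continuous_norm continuous_const)
    have hKbd : Bornology.IsBounded K :=
      (Metric.isBounded_closedBall (x := (0:E n)) (r := 1)).subset fun v hv => by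
        rw [Metric.mem_closedBall, dist_zero_right, hv.2]
    have hKcp : IsCompact K := Metric.isCompact_of_isClosed_isBounded hKcl hKbd
    have hcont : Continuous fun v : E n => ‖Mlin A L v‖ :=
      ((Mlin A L).continuous_of_finiteDimensional).norm
    obtain ⟨v₀, hv₀K, hv₀max⟩ := hKcp.exists_isMaxOn hKne hcont.continuousOn
    have hv₀0 : v₀ ≠ 0 := fun h => by
      have := hv₀K.2
      rw [h] at this
      simp at this
    refine ⟨‖Mlin A L v₀‖, norm_nonneg _, ?_, fun v hv => ?_⟩
    · have := Mlin_contract_strict hlipg hLf0 hLfL hL0 (hPhiv v₀ hv₀K.1 hv₀0)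
      rwa [hv₀K.2] at this
    · rcases eq_or_ne v 0 with rfl | hv0
      · simp
      · have hu : (‖v‖⁻¹ • v) ∈ K := by
          refine ⟨W.smul_mem _ hv, ?_⟩
          show ‖‖v‖⁻¹ • v‖ = 1
          rw [norm_smul, norm_inv, norm_norm, inv_mul_cancel₀ (norm_ne_zero_iff.mpr hv0)]
        have hle : ‖Mlin A L (‖v‖⁻¹ • v)‖ ≤ ‖Mlin A L v₀‖ := hv₀max hu
        rw [_root_.map_smul, norm_smul, norm_inv, norm_norm] at hle
        have hdn : 0 < ‖v‖ := norm_pos_iff.mpr hv0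
        calc ‖Mlin A L v‖ = ‖v‖ * (‖v‖⁻¹ * ‖Mlin A L v‖) := by field_simp
          _ ≤ ‖v‖ * ‖Mlin A L v₀‖ := mul_le_mul_of_nonneg_left hle hdn.le
          _ = ‖Mlin A L v₀‖ * ‖v‖ := mul_comm _ _

end affine

end S16

/-- For f = ‖Ax-b‖² with A s-regular, the whole IHT sequence converges to an
L-stationary point. -/
theorem stmt16 {m n s : ℕ} (A : Matrix (Fin m) (Fin n) ℝ) (b : Fin m → ℝ)
    (hreg : ∀ S : Finset (Fin n), S.card = s →
      LinearIndependent ℝ (fun j : S => fun i => A i j))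
    (f : EuclideanSpace ℝ (Fin n) → ℝ)
    (hfdef : ∀ x, f x = ∑ i, (A.mulVec (fun j => x j) i - b i) ^ 2)
    (Lf L : ℝ)
    (hlip : ∀ x y, ‖gradient f x - gradient f y‖ ≤ Lf * ‖x - y‖)
    (hL : Lf < L)
    (x : ℕ → EuclideanSpace ℝ (Fin n)) (hx0 : x 0 ∈ Cs n s)
    (hiter : ∀ k, x (k + 1) ∈ projCs n s (x k - (1 / L) • gradient f (x k))) :
    ∃ xstar : EuclideanSpace ℝ (Fin n),
      Filter.Tendsto x Filter.atTop (nhds xstar) ∧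
      xstar ∈ projCs n s (xstar - (1 / L) • gradient f xstar) := by
  classical
  rcases Nat.eq_zero_or_pos n with hn0 | hnpos
  · subst hn0
    have hsub : Subsingleton (EuclideanSpace ℝ (Fin 0)) := by infer_instance
    refine ⟨x 0, ?_, hx0, fun z hz => ?_⟩
    · have hxconst : x = fun _ => x 0 := funext fun k => Subsingleton.elim _ _
      rw [hxconst]
      exact tendsto_const_nhds
    · rw [Subsingleton.elim z (x 0)]
  have hg : gradient f = S16.gval A b := S16.grad_eq hfdef
  rw [hg] at hlip hiter
  have hLf0 : 0 ≤ Lf := by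
    set i0 : Fin n := ⟨0, hnpos⟩
    have h := hlip (EuclideanSpace.single i0 (1:ℝ)) 0
    rw [sub_zero, EuclideanSpace.norm_single] at h
    norm_num at h
    exact le_trans (norm_nonneg _) h
  have hL0 : 0 < L := lt_of_le_of_lt hLf0 hL
  have hCs : ∀ k, x k ∈ Cs n s := by
    intro k
    cases k with
    | zero => exact hx0
    | succ k => exact (hiter k).1
  have hdec : ∀ k, f (x (k+1)) + ((L - Lf)/2) * ‖x (k+1) - x k‖ ^ 2 ≤ f (x k) :=
    fun k => S16.decrease hlip hfdef hL0 (hCs k) (hiter k)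
  have hmono : ∀ k, f (x (k+1)) ≤ f (x k) := by
    intro k
    nlinarith [hdec k, sq_nonneg ‖x (k+1) - x k‖]
  have hfle : ∀ k, f (x k) ≤ f (x 0) := by
    intro k
    induction k with
    | zero => exact le_refl _
    | succ k ih => exact le_trans (hmono k) ih
  have hf0 : ∀ k, 0 ≤ f (x k) := fun k => S16.f_nonneg hfdef (x k)
  have hbdd : BddBelow (Set.range fun k => f (x k)) := by
    refine ⟨0, ?_⟩
    rintro v ⟨k, rfl⟩
    exact hf0 k
  have hl : Filter.Tendsto (fun k => f (x k)) Filter.atTop (nhds (⨅ k, f (x k))) :=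
    tendsto_atTop_ciInf (antitone_nat_of_succ_le hmono) hbdd
  have hdiff : Filter.Tendsto (fun k => f (x k) - f (x (k+1))) Filter.atTop (nhds 0) := by
    have h2 : Filter.Tendsto (fun k => f (x (k+1))) Filter.atTop (nhds (⨅ k, f (x k))) :=
      hl.comp (Filter.tendsto_add_atTop_nat 1)
    simpa using hl.sub h2
  have hsq0 : Filter.Tendsto (fun k => ‖x (k+1) - x k‖ ^ 2) Filter.atTop (nhds 0) := by
    have hub : ∀ k, ‖x (k+1) - x k‖ ^ 2 ≤ (2/(L-Lf)) * (f (x k) - f (x (k+1))) := by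
      intro k
      have hpos : (0:ℝ) < L - Lf := by linarith
      have h1 : ((L - Lf)/2) * ‖x (k+1) - x k‖ ^ 2 ≤ f (x k) - f (x (k+1)) := by
        linarith [hdec k]
      have h2 := mul_le_mul_of_nonneg_left h1 (le_of_lt (by positivity : (0:ℝ) < 2/(L-Lf)))
      calc ‖x (k+1) - x k‖ ^ 2
          = (2/(L-Lf)) * (((L - Lf)/2) * ‖x (k+1) - x k‖ ^ 2) := by field_simp
        _ ≤ (2/(L-Lf)) * (f (x k) - f (x (k+1))) := h2
    have hup : Filter.Tendsto (fun k => (2/(L-Lf)) * (f (x k) - f (x (k+1))))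
        Filter.atTop (nhds 0) := by
      simpa using hdiff.const_mul (2/(L-Lf))
    exact tendsto_of_tendsto_of_tendsto_of_le_of_le tendsto_const_nhds hup
      (fun k => sq_nonneg _) hub
  have hstepnorm : Filter.Tendsto (fun k => ‖x (k+1) - x k‖) Filter.atTop (nhds 0) := by
    have h := hsq0.sqrt
    rw [Real.sqrt_zero] at h
    exact h.congr fun k => Real.sqrt_sq (norm_nonneg _)
  have hstep : Filter.Tendsto (fun k => x (k+1) - x k) Filter.atTop (nhds 0) :=
    tendsto_zero_iff_norm_tendsto_zero.mpr hstepnorm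
  rcases le_or_gt s n with hsn | hns
  · -- sparse case
    obtain ⟨R, hR⟩ := S16.exists_bound (b := b) hreg hsn (f (x 0))
    have hbk : ∀ k, ‖x k‖ ≤ R := fun k =>
      hR (x k) (hCs k) (by rw [← S16.fval hfdef]; exact hfle k)
    have hFfin := S16.stat_finite (b := b) (ne_of_gt hL0) hreg hsn
    obtain ⟨p, hp⟩ := S16.converge_of_finite_cluster x R hbk
      (by simpa [dist_eq_norm] using hstepnorm) _ hFfin
      (fun p hsub => by
        obtain ⟨φ, hφ, hlim⟩ := hsub
        rw [Set.mem_setOf_eq]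
        exact S16.cluster_stationary x hiter hstep φ hφ hlim)
    refine ⟨p, hp, ?_⟩
    rw [hg]
    exact S16.cluster_stationary x hiter hstep id strictMono_id (by simpa using hp)
  · -- dense case
    have hCsall : ∀ y : EuclideanSpace ℝ (Fin n), y ∈ Cs n s := by
      intro y
      rw [S16.mem_Cs]
      calc (S16.supp y).card ≤ Fintype.card (Fin n) := Finset.card_le_univ _
        _ = n := Fintype.card_fin n
        _ ≤ s := hns.le
    have hproj : ∀ w y : EuclideanSpace ℝ (Fin n), y ∈ projCs n s w → y = w := by
      intro w y hy
      have h1 := hy.2 w (hCsall w)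
      rw [sub_self, norm_zero] at h1
      exact sub_eq_zero.mp (norm_le_zero_iff.mp h1)
    have hrec : ∀ k, x (k+1) = x k - (1/L) • S16.gval A b (x k) :=
      fun k => hproj _ _ (hiter k)
    have hdrec : ∀ k, x (k+1+1) - x (k+1) = S16.Mlin A L (x (k+1) - x k) := by
      intro k
      have e1 : x (k+1+1) - x (k+1) = -((1/L) • S16.gval A b (x (k+1))) := by
        rw [hrec (k+1)]; abel
      have e0 : x (k+1) - x k = -((1/L) • S16.gval A b (x k)) := by
        rw [hrec k]; abel
      have h2 : S16.gval A b (x (k+1)) - S16.gval A b (x k)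
          = (2:ℝ) • S16.Phi Aᵀ (S16.Phi A (x (k+1) - x k)) := by
        have h3 := S16.gval_sub (A := A) (b := b) (x k) (x (k+1) - x k)
        have hxk : x k + (x (k+1) - x k) = x (k+1) := by abel
        rwa [hxk] at h3
      have h4 : (2/L : ℝ) • S16.Phi Aᵀ (S16.Phi A (x (k+1) - x k))
          = (1/L) • (S16.gval A b (x (k+1)) - S16.gval A b (x k)) := by
        rw [h2, smul_smul]
        congr 1
        ring
      rw [S16.Mlin_apply, h4, e1, smul_sub, e0]
      abel
    have hdmem : ∀ k, x (k+1) - x k ∈ LinearMap.range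
        (S16.Phi Aᵀ : S16.E m →ₗ[ℝ] S16.E n) := by
      intro k
      induction k with
      | zero =>
        have e0 : x (0+1) - x 0 = -((1/L) • S16.gval A b (x 0)) := by
          rw [hrec 0]; abel
        refine ⟨-((2/L) • (S16.Phi A (x 0) - S16.bE b)), ?_⟩
        rw [e0, map_neg, _root_.map_smul, S16.gval, smul_smul]
        rw [← neg_smul, ← neg_smul]
        congr 1
        ring
      | succ k ih =>
        rw [hdrec k]
        exact S16.Mlin_maps_range _ ih
    obtain ⟨q, hq0, hq1, hqc⟩ := S16.contraction hlip hLf0 hL hL0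
    have hgeo : ∀ k, ‖x (k+1) - x k‖ ≤ ‖x (0+1) - x 0‖ * q ^ k := by
      intro k
      induction k with
      | zero => simp
      | succ k ih =>
        calc ‖x (k+1+1) - x (k+1)‖ = ‖S16.Mlin A L (x (k+1) - x k)‖ := by rw [hdrec k]
          _ ≤ q * ‖x (k+1) - x k‖ := hqc _ (hdmem k)
          _ ≤ q * (‖x (0+1) - x 0‖ * q ^ k) := mul_le_mul_of_nonneg_left ih hq0
          _ = ‖x (0+1) - x 0‖ * q ^ (k+1) := by ring
    have hcauchy : CauchySeq x := by
      refine cauchySeq_of_le_geometric q (‖x (0+1) - x 0‖) hq1 fun k => ?_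
      rw [dist_eq_norm, norm_sub_rev]
      exact hgeo k
    obtain ⟨p, hp⟩ := cauchySeq_tendsto_of_complete hcauchy
    have h1 : Filter.Tendsto (fun k => x (k+1)) Filter.atTop (nhds p) :=
      hp.comp (Filter.tendsto_add_atTop_nat 1)
    have h2 : Filter.Tendsto (fun k => x k - (1/L) • S16.gval A b (x k)) Filter.atTop
        (nhds (p - (1/L) • S16.gval A b p)) :=
      hp.sub ((((S16.gval_continuous A b).tendsto p).comp hp).const_smul _)
    have hfix : p = p - (1/L) • S16.gval A b p :=
      tendsto_nhds_unique (h1.congr fun k => hrec k) h2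
    refine ⟨p, hp, ?_⟩
    rw [hg, ← hfix]
    exact ⟨hCsall p, fun z hz => by rw [sub_self, norm_zero]; exact norm_nonneg _⟩
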